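/- Let a > 0 be a real number, N ≥ 1, c₁,...,c_N complex numbers not all zero, and λ₁,...,λ_N distinct real numbers. Then the function f(s) = e^{as} · Σ_{k=1}^N c_k e^{iλ_k s} is unbounded on [0,∞). -/

import Mathlib

open Complex MeasureTheory intervalIntegral

theorem stmt_0 (a : ℝ) (ha : 0 < a) (N : ℕ) (hN : 1 ≤ N)
    (c : Fin N → ℂ) (hc : ∃ k, c k ≠ 0)
    (lam : Fin N → ℝ) (hlam : Function.Injective lam)
    (f : ℝ → ℂ)
    (hf : ∀ s : ℝ, f s = Real.exp (a * s) * ∑ k, c k * Complex.exp (Complex.I * (lam k * s))) :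
    ¬ ∃ M : ℝ, ∀ s : ℝ, 0 ≤ s → ‖f s‖ ≤ M := by
  obtain ⟨j, hj⟩ := hc
  rintro ⟨M, hM⟩
  set g : ℝ → ℂ := fun s => ∑ k, c k * Complex.exp (Complex.I * (lam k * s)) with hg
  set h : ℝ → ℂ := fun s => ∑ k, c k * Complex.exp ((Complex.I * ((lam k : ℂ) - lam j)) * s)
    with hh
  have hM0 : 0 ≤ M := le_trans (norm_nonneg _) (hM 0 le_rfl)
  -- norm of h equals norm of g
  have hgh : ∀ s : ℝ, h s = g s * Complex.exp (-(Complex.I * lam j * s)) := by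
    intro s
    simp only [hh, hg, Finset.sum_mul]
    refine Finset.sum_congr rfl fun k _ => ?_
    conv_rhs => rw [mul_assoc, ← Complex.exp_add]
    ring_nf
  have hgb : ∀ s : ℝ, 0 ≤ s → ‖g s‖ ≤ M * Real.exp (-(a * s)) := by
    intro s hs
    have h1 := hM s hs
    rw [hf s, norm_mul, Complex.norm_real, Real.norm_eq_abs,
      abs_of_pos (Real.exp_pos _)] at h1
    have h2 : ‖g s‖ ≤ M / Real.exp (a * s) :=
      (le_div_iff₀ (Real.exp_pos _)).2 (by linarith [h1])
    rwa [div_eq_mul_inv, ← Real.exp_neg] at h2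
  have hhb : ∀ s : ℝ, 0 ≤ s → ‖h s‖ ≤ M * Real.exp (-(a * s)) := by
    intro s hs
    rw [hgh s, norm_mul]
    have : ‖Complex.exp (-(Complex.I * lam j * s))‖ = 1 := by
      rw [Complex.norm_exp]
      simp
    rw [this, mul_one]
    exact hgb s hs
  -- continuity / integrability
  have hcont : Continuous h := by
    apply continuous_finset_sum
    intro k _
    exact continuous_const.mul (Complex.continuous_exp.comp
      (continuous_const.mul Complex.continuous_ofReal))
  -- bound on integral of h
  have hintb : ∀ T : ℝ, 0 ≤ T → ‖∫ s in (0:ℝ)..T, h s‖ ≤ M / a := by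
    intro T hT
    have h1 : ‖∫ s in (0:ℝ)..T, h s‖ ≤ ∫ s in (0:ℝ)..T, M * Real.exp (-(a * s)) := by
      refine (intervalIntegral.norm_integral_le_integral_norm hT).trans ?_
      apply intervalIntegral.integral_mono_on hT
      · exact (hcont.norm.intervalIntegrable 0 T)
      · exact ((continuous_const.mul ((Real.continuous_exp.comp
          (continuous_const.mul continuous_id).neg))).intervalIntegrable 0 T)
      · intro s hs
        exact hhb s hs.1
    refine h1.trans ?_
    have h2 : ∀ s : ℝ, -(a * s) = Real.exp ((-a) * s) → True := fun _ _ => trivial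
    have h3 : (∫ s in (0:ℝ)..T, Real.exp (-(a * s)))
        = (1 - Real.exp (-(a * T))) / a := by
      have : (fun s : ℝ => Real.exp (-(a * s))) = fun s : ℝ => Real.exp ((-a) * s) := by
        funext s; ring_nf
      rw [this, intervalIntegral.integral_comp_mul_left Real.exp (by linarith : (-a) ≠ 0)]
      simp only [mul_zero, integral_exp, Real.exp_zero, smul_eq_mul]
      have hane : a ≠ 0 := ne_of_gt ha
      field_simp
      ring
    rw [intervalIntegral.integral_const_mul, h3]
    have h4 : (1 - Real.exp (-(a * T))) / a ≤ 1 / a := by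
      gcongr
      linarith [Real.exp_pos (-(a * T))]
    calc M * ((1 - Real.exp (-(a * T))) / a) ≤ M * (1 / a) := by
          exact mul_le_mul_of_nonneg_left h4 hM0
      _ = M / a := by ring
  -- explicit integral computation
  set B : ℝ := ∑ k ∈ Finset.univ.erase j, ‖c k‖ * (2 / |lam k - lam j|) with hB
  have hBnn : 0 ≤ B := by
    apply Finset.sum_nonneg
    intro k _
    positivity
  have hjT : ∀ T : ℝ, 0 ≤ T → ‖c j‖ * T ≤ M / a + B := by
    intro T hT
    have hsplit : (∫ s in (0:ℝ)..T, h s)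
        = ∑ k, (c k * ∫ s in (0:ℝ)..T, Complex.exp ((Complex.I * ((lam k : ℂ) - lam j)) * s)) := by
      rw [hh]
      rw [intervalIntegral.integral_finset_sum]
      · exact Finset.sum_congr rfl fun k _ => by
          rw [intervalIntegral.integral_const_mul]
      · intro k _
        exact (continuous_const.mul (Complex.continuous_exp.comp
          (continuous_const.mul Complex.continuous_ofReal))).intervalIntegrable 0 T
    have hjterm : (c j * ∫ s in (0:ℝ)..T, Complex.exp ((Complex.I * ((lam j : ℂ) - lam j)) * s))
        = c j * T := by
      simp
    have hsum : (∫ s in (0:ℝ)..T, h s) = c j * T +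
        ∑ k ∈ Finset.univ.erase j,
          (c k * ∫ s in (0:ℝ)..T, Complex.exp ((Complex.I * ((lam k : ℂ) - lam j)) * s)) := by
      rw [hsplit, ← hjterm, ← Finset.add_sum_erase _ _ (Finset.mem_univ j)]
    have hterm : ∀ k ∈ Finset.univ.erase j,
        ‖c k * ∫ s in (0:ℝ)..T, Complex.exp ((Complex.I * ((lam k : ℂ) - lam j)) * s)‖
          ≤ ‖c k‖ * (2 / |lam k - lam j|) := by
      intro k hk
      have hkj : lam k ≠ lam j := fun hkl => (Finset.mem_erase.1 hk).1 (hlam hkl)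
      have hne : (Complex.I * ((lam k : ℂ) - lam j)) ≠ 0 := by
        refine mul_ne_zero Complex.I_ne_zero ?_
        rw [sub_ne_zero]
        exact_mod_cast hkj
      rw [integral_exp_mul_complex hne, norm_mul]
      apply mul_le_mul_of_nonneg_left _ (norm_nonneg _)
      rw [norm_div]
      have hden : ‖Complex.I * ((lam k : ℂ) - lam j)‖ = |lam k - lam j| := by
        rw [norm_mul, Complex.norm_I, one_mul, ← Complex.ofReal_sub,
          Complex.norm_real, Real.norm_eq_abs]
      rw [hden]
      have habs : 0 < |lam k - lam j| := abs_pos.2 (sub_ne_zero.2 hkj)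
      gcongr
      refine (norm_sub_le _ _).trans ?_
      have e1 : ‖Complex.exp (Complex.I * ((lam k : ℂ) - lam j) * T)‖ = 1 := by
        rw [Complex.norm_exp]
        simp
      have e2 : ‖Complex.exp (Complex.I * ((lam k : ℂ) - lam j) * ((0:ℝ):ℂ))‖ = 1 := by
        rw [Complex.norm_exp]
        simp
      rw [e1, e2]; norm_num
    have h7 : ‖∑ k ∈ Finset.univ.erase j,
        (c k * ∫ s in (0:ℝ)..T, Complex.exp ((Complex.I * ((lam k : ℂ) - lam j)) * s))‖ ≤ B :=
      (norm_sum_le _ _).trans (Finset.sum_le_sum hterm)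
    have heq : c j * (T : ℂ) = (∫ s in (0:ℝ)..T, h s) - ∑ k ∈ Finset.univ.erase j,
        (c k * ∫ s in (0:ℝ)..T, Complex.exp ((Complex.I * ((lam k : ℂ) - lam j)) * s)) := by
      rw [hsum]; ring
    have h5 : ‖c j * (T : ℂ)‖ ≤ M / a + B := by
      rw [heq]
      exact (norm_sub_le _ _).trans (add_le_add (hintb T hT) h7)
    rw [norm_mul, Complex.norm_real, Real.norm_eq_abs, _root_.abs_of_nonneg hT] at h5
    exact h5
  -- choose T large
  have hcj : 0 < ‖c j‖ := norm_pos_iff.2 hj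
  set T : ℝ := (M / a + B + 1) / ‖c j‖ with hT
  have hT0 : 0 ≤ T := by positivity
  have := hjT T hT0
  rw [hT, mul_div_cancel₀ _ (ne_of_gt hcj)] at this
  linarith
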